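/- arXiv:1510.08175 — 3 statements merged into one kernel-verified Lean document; each statement's English description precedes it below -/
import Mathlib

section
/- (Easy case of Theorem 1, Rendl–Wolkowicz) Suppose a is not orthogonal to the eigenspace of λmin(A) (the easy case). Then for every t ∈ ℝ, λmin(D(t)) < λmin(A) and λmin(D(t)) is a simple eigenvalue of D(t) (its eigenspace is one-dimensional). -/
open Matrix

/-- The smallest eigenvalue of a real (symmetric) matrix. -/
noncomputable def lambdaMin {ι : Type} [Fintype ι] (M : Matrix ι ι ℝ) : ℝ :=
  sInf {μ : ℝ | ∃ v : ι → ℝ, v ≠ 0 ∧ M.mulVec v = μ • v}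

/-- The multiplicity of the smallest eigenvalue: the dimension of Null(M - λmin(M)·I). -/
noncomputable def eigMult {ι : Type} [Fintype ι] [DecidableEq ι] (M : Matrix ι ι ℝ) : ℕ :=
  Module.finrank ℝ (LinearMap.ker (M - lambdaMin M • (1 : Matrix ι ι ℝ)).mulVecLin)

/-- The bordered matrix D(t) = [[t, -aᵀ],[-a, A]]. -/
noncomputable def borderD {n : ℕ} (A : Matrix (Fin n) (Fin n) ℝ) (a : Fin n → ℝ) (t : ℝ) :
    Matrix (Unit ⊕ Fin n) (Unit ⊕ Fin n) ℝ :=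
  Matrix.fromBlocks (Matrix.of fun (_ : Unit) (_ : Unit) => t)
    (Matrix.of fun (_ : Unit) (j : Fin n) => -a j)
    (Matrix.of fun (i : Fin n) (_ : Unit) => -a i) A

/-- The bordered matrix D(t,λ) = [[t, (-a + (λ/2)b)ᵀ],[-a + (λ/2)b, A]]. -/
noncomputable def borderD2 {n : ℕ} (A : Matrix (Fin n) (Fin n) ℝ) (a b : Fin n → ℝ)
    (t l : ℝ) : Matrix (Unit ⊕ Fin n) (Unit ⊕ Fin n) ℝ :=
  borderD A (fun j => a j - (l / 2) * b j) t

/-- The objective xᵀAx - 2aᵀx. -/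
noncomputable def objQ {n : ℕ} (A : Matrix (Fin n) (Fin n) ℝ) (a : Fin n → ℝ)
    (x : Fin n → ℝ) : ℝ :=
  x ⬝ᵥ A.mulVec x - 2 * (a ⬝ᵥ x)

/-- The optimal value p* of eTRS. -/
noncomputable def pstar {n : ℕ} (A : Matrix (Fin n) (Fin n) ℝ) (a b : Fin n → ℝ)
    (c Δ : ℝ) : ℝ :=
  sInf {v : ℝ | ∃ x : Fin n → ℝ, x ⬝ᵥ x ≤ Δ ∧ b ⬝ᵥ x ≤ c ∧ v = objQ A a x}

/-- The Lagrangian of eTRS. -/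
noncomputable def lagr {n : ℕ} (A : Matrix (Fin n) (Fin n) ℝ) (a b : Fin n → ℝ)
    (c Δ : ℝ) (x : Fin n → ℝ) (l1 l2 : ℝ) : ℝ :=
  objQ A a x + l1 * (x ⬝ᵥ x - Δ) + l2 * (b ⬝ᵥ x - c)

/-- The Lagrangian dual value d* of eTRS:
the supremum over λ1, λ2 ≥ 0 of inf_x of the Lagrangian, encoded as the supremum of all
values that are lower bounds of the Lagrangian for some admissible multipliers. -/
noncomputable def dstar {n : ℕ} (A : Matrix (Fin n) (Fin n) ℝ) (a b : Fin n → ℝ)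
    (c Δ : ℝ) : ℝ :=
  sSup {v : ℝ | ∃ l1 l2 : ℝ, 0 ≤ l1 ∧ 0 ≤ l2 ∧ ∀ x : Fin n → ℝ, v ≤ lagr A a b c Δ x l1 l2}

/-- x is a global optimal solution of eTRS. -/
def isOptimal {n : ℕ} (A : Matrix (Fin n) (Fin n) ℝ) (a b : Fin n → ℝ)
    (c Δ : ℝ) (x : Fin n → ℝ) : Prop :=
  x ⬝ᵥ x ≤ Δ ∧ b ⬝ᵥ x ≤ c ∧
    ∀ y : Fin n → ℝ, y ⬝ᵥ y ≤ Δ → b ⬝ᵥ y ≤ c → objQ A a x ≤ objQ A a y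

/-- The dual objective k(t,λ) = (Δ+1)·λmin(D(t,λ)) - t - λc. -/
noncomputable def ktl {n : ℕ} (A : Matrix (Fin n) (Fin n) ℝ) (a b : Fin n → ℝ)
    (c Δ : ℝ) (t l : ℝ) : ℝ :=
  (Δ + 1) * lambdaMin (borderD2 A a b t l) - t - l * c
section Aux

variable {ι : Type} [Fintype ι] [DecidableEq ι] {M : Matrix ι ι ℝ}

lemma real_symm (hM : M.IsHermitian) : Mᵀ = M := by
  ext i j; have := congrFun (congrFun hM.eq i) j
  simpa [Matrix.conjTranspose_apply] using this

lemma dot_symm (hM : M.IsHermitian) (u v : ι → ℝ) :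
    (M *ᵥ u) ⬝ᵥ v = u ⬝ᵥ (M *ᵥ v) := by
  rw [Matrix.dotProduct_mulVec, ← Matrix.mulVec_transpose, real_symm hM]

lemma eig_mem_range (hM : M.IsHermitian) {μ : ℝ} {v : ι → ℝ} (hv : v ≠ 0)
    (h : M.mulVec v = μ • v) : ∃ i, μ = hM.eigenvalues i := by
  by_contra hc
  push_neg at hc
  apply hv
  have key : ∀ i, hM.eigenvectorBasis.repr (WithLp.toLp 2 v : EuclideanSpace ℝ ι) i = 0 := by
    intro i
    have hrepr : hM.eigenvectorBasis.repr (WithLp.toLp 2 v : EuclideanSpace ℝ ι) i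
        = ⇑(hM.eigenvectorBasis i) ⬝ᵥ v := by
      rw [OrthonormalBasis.repr_apply_apply]
      simp [PiLp.inner_apply, dotProduct, mul_comm]
    have h1 : hM.eigenvalues i * (⇑(hM.eigenvectorBasis i) ⬝ᵥ v)
        = μ * (⇑(hM.eigenvectorBasis i) ⬝ᵥ v) := by
      calc hM.eigenvalues i * (⇑(hM.eigenvectorBasis i) ⬝ᵥ v)
          = (hM.eigenvalues i • ⇑(hM.eigenvectorBasis i)) ⬝ᵥ v := by
            rw [smul_dotProduct]; rfl
        _ = (M *ᵥ ⇑(hM.eigenvectorBasis i)) ⬝ᵥ v := by rw [hM.mulVec_eigenvectorBasis]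
        _ = ⇑(hM.eigenvectorBasis i) ⬝ᵥ (M *ᵥ v) := dot_symm hM _ _
        _ = ⇑(hM.eigenvectorBasis i) ⬝ᵥ (μ • v) := by rw [h]
        _ = μ * (⇑(hM.eigenvectorBasis i) ⬝ᵥ v) := by
            rw [dotProduct_smul]; rfl
    have h2 : (hM.eigenvalues i - μ) * (⇑(hM.eigenvectorBasis i) ⬝ᵥ v) = 0 := by ring_nf; linarith [h1]
    rcases mul_eq_zero.mp h2 with h3 | h3
    · exact absurd (by linarith : μ = hM.eigenvalues i) (hc i)
    · rw [hrepr]; exact h3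
  have : hM.eigenvectorBasis.repr (WithLp.toLp 2 v : EuclideanSpace ℝ ι) = 0 := by
    ext i; exact key i
  have : (WithLp.toLp 2 v : EuclideanSpace ℝ ι) = 0 := by
    simpa using congrArg hM.eigenvectorBasis.repr.symm this
  simpa using congrArg WithLp.ofLp this

lemma specSet_eq (hM : M.IsHermitian) :
    {μ : ℝ | ∃ v : ι → ℝ, v ≠ 0 ∧ M.mulVec v = μ • v} = Set.range hM.eigenvalues := by
  ext μ
  constructor
  · rintro ⟨v, hv, h⟩
    obtain ⟨i, hi⟩ := eig_mem_range hM hv h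
    exact ⟨i, hi.symm⟩
  · rintro ⟨i, rfl⟩
    refine ⟨⇑(hM.eigenvectorBasis i), ?_, hM.mulVec_eigenvectorBasis i⟩
    intro h0
    have : hM.eigenvectorBasis i = 0 := by
      apply PiLp.ext; intro j; exact congrFun h0 j
    exact hM.eigenvectorBasis.orthonormal.ne_zero i this

variable [Nonempty ι]

lemma lambdaMin_le (hM : M.IsHermitian) (i : ι) : lambdaMin M ≤ hM.eigenvalues i := by
  rw [lambdaMin, specSet_eq hM]
  exact csInf_le (Set.finite_range _).bddBelow ⟨i, rfl⟩

lemma lambdaMin_exists_eig (hM : M.IsHermitian) :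
    ∃ v : ι → ℝ, v ≠ 0 ∧ M.mulVec v = lambdaMin M • v := by
  have : lambdaMin M ∈ {μ : ℝ | ∃ v : ι → ℝ, v ≠ 0 ∧ M.mulVec v = μ • v} := by
    rw [lambdaMin]
    apply Set.Nonempty.csInf_mem
    · rw [specSet_eq hM]; exact Set.range_nonempty _
    · rw [specSet_eq hM]; exact Set.finite_range _
  exact this

lemma lambdaMin_le_of_eig (hM : M.IsHermitian) {μ : ℝ} {v : ι → ℝ} (hv : v ≠ 0)
    (h : M.mulVec v = μ • v) : lambdaMin M ≤ μ := by
  obtain ⟨i, rfl⟩ := eig_mem_range hM hv h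
  exact lambdaMin_le hM i

lemma ker_trivial (hM : M.IsHermitian) {l : ℝ} (hl : l < lambdaMin M) {v : ι → ℝ}
    (hv : M *ᵥ v = l • v) : v = 0 := by
  by_contra h0
  exact absurd (lambdaMin_le_of_eig hM h0 hv) (not_le.mpr hl)

lemma sub_posSemidef (hM : M.IsHermitian) : (M - lambdaMin M • 1).PosSemidef := by
  have h1 : ((lambdaMin M : ℝ) • (1 : Matrix ι ι ℝ)).IsHermitian := by
    unfold Matrix.IsHermitian
    ext i j
    simp [Matrix.conjTranspose_apply, Matrix.one_apply]
    by_cases hij : i = j <;> simp [hij] <;> aesop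
  have h' : (M - lambdaMin M • 1).IsHermitian := hM.sub h1
  apply h'.posSemidef_iff_eigenvalues_nonneg.mpr
  intro i
  set N := M - lambdaMin M • (1 : Matrix ι ι ℝ)
  have hne : (⇑(h'.eigenvectorBasis i) : ι → ℝ) ≠ 0 := by
    intro h0
    exact h'.eigenvectorBasis.orthonormal.ne_zero i (PiLp.ext fun j => congrFun h0 j)
  have heig := h'.mulVec_eigenvectorBasis i
  have hMv : M *ᵥ ⇑(h'.eigenvectorBasis i)
      = (h'.eigenvalues i + lambdaMin M) • ⇑(h'.eigenvectorBasis i) := by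
    have : N *ᵥ ⇑(h'.eigenvectorBasis i)
        = M *ᵥ ⇑(h'.eigenvectorBasis i) - lambdaMin M • ⇑(h'.eigenvectorBasis i) := by
      simp [N, Matrix.sub_mulVec, Matrix.smul_mulVec]
    rw [this] at heig
    rw [add_smul]
    linear_combination (norm := module) heig
  have := lambdaMin_le_of_eig hM hne hMv
  have h0 : (0:ℝ) ≤ h'.eigenvalues i := by linarith
  exact h0

lemma lambdaMin_rayleigh (hM : M.IsHermitian) (x : ι → ℝ) :
    lambdaMin M * (x ⬝ᵥ x) ≤ x ⬝ᵥ (M *ᵥ x) := by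
  have h := (sub_posSemidef hM).dotProduct_mulVec_nonneg x
  simp only [Matrix.sub_mulVec, dotProduct_sub, Matrix.smul_mulVec,
    Matrix.one_mulVec, dotProduct_smul, smul_eq_mul] at h
  simp only [RCLike.re_to_real, star_trivial] at h
  linarith [h]

end Aux


section Border

variable {n : ℕ} (A : Matrix (Fin n) (Fin n) ℝ) (a : Fin n → ℝ) (t : ℝ)

lemma borderD_isHermitian (hA : A.IsHermitian) : (borderD A a t).IsHermitian := by
  have hAs : ∀ i j, A j i = A i j := by
    intro i j
    have := congrFun (congrFun hA.eq i) j
    simpa [Matrix.conjTranspose_apply] using this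
  unfold Matrix.IsHermitian
  ext i j
  rcases i with i | i <;> rcases j with j | j <;>
      simp [borderD, Matrix.conjTranspose_apply] <;>
    exact hAs _ _

lemma borderD_mulVec_inl (x : Unit ⊕ Fin n → ℝ) :
    ((borderD A a t) *ᵥ x) (Sum.inl ()) = t * x (Sum.inl ()) - a ⬝ᵥ (fun j => x (Sum.inr j)) := by
  simp [borderD, Matrix.mulVec, dotProduct, Fintype.sum_sum_type, neg_mul,
    Finset.sum_neg_distrib, sub_eq_add_neg]

lemma borderD_mulVec_inr (x : Unit ⊕ Fin n → ℝ) (i : Fin n) :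
    ((borderD A a t) *ᵥ x) (Sum.inr i)
      = -(x (Sum.inl ())) * a i + (A *ᵥ fun j => x (Sum.inr j)) i := by
  simp [borderD, Matrix.mulVec, dotProduct, Fintype.sum_sum_type]
  ring

lemma dot_sum_split (x y : Unit ⊕ Fin n → ℝ) :
    x ⬝ᵥ y = x (Sum.inl ()) * y (Sum.inl ())
      + (fun j => x (Sum.inr j)) ⬝ᵥ (fun j => y (Sum.inr j)) := by
  simp [dotProduct, Fintype.sum_sum_type]

end Border


/-- Easy case of Theorem 1 (Rendl–Wolkowicz). -/
theorem stmt0 {n : ℕ} (hn : 1 ≤ n) (A : Matrix (Fin n) (Fin n) ℝ) (hA : A.IsHermitian)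
    (a : Fin n → ℝ) (Δ : ℝ) (hΔ : 0 < Δ)
    (heasy : ∃ v : Fin n → ℝ, A.mulVec v = lambdaMin A • v ∧ a ⬝ᵥ v ≠ 0) :
    ∀ t : ℝ, lambdaMin (borderD A a t) < lambdaMin A ∧ eigMult (borderD A a t) = 1 := by
  have : Nonempty (Fin n) := ⟨⟨0, hn⟩⟩
  obtain ⟨v, hv, hav⟩ := heasy
  intro t
  set D := borderD A a t with hDdef
  have hD : D.IsHermitian := borderD_isHermitian A a t hA
  set lA := lambdaMin A with hlA
  set lD := lambdaMin D with hlD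
  -- Step 1: lD < lA
  have hvv : (0:ℝ) ≤ v ⬝ᵥ v := Finset.sum_nonneg fun i _ => mul_self_nonneg _
  have step1 : lD < lA := by
    by_contra hge
    push_neg at hge
    set ε : ℝ := |a ⬝ᵥ v| / (|t - lA| + 1) with hεdef
    have hden : (0:ℝ) < |t - lA| + 1 := by positivity
    have hε : 0 < ε := div_pos (abs_pos.mpr hav) hden
    have habs : ε * (|t - lA| + 1) = |a ⬝ᵥ v| := by
      rw [hεdef, div_mul_cancel₀ _ hden.ne']
    set s : ℝ := if 0 < a ⬝ᵥ v then ε else -ε with hsdef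
    have hs2 : s * s = ε * ε := by
      rcases ite_eq_or_eq (0 < a ⬝ᵥ v) ε (-ε) with h | h <;> rw [hsdef, h] <;> ring
    have hsav : s * (a ⬝ᵥ v) = ε * |a ⬝ᵥ v| := by
      by_cases hp : 0 < a ⬝ᵥ v
      · rw [hsdef, if_pos hp, abs_of_pos hp]
      · have : a ⬝ᵥ v < 0 := lt_of_le_of_ne (not_lt.mp hp) hav
        rw [hsdef, if_neg hp, abs_of_neg this]; ring
    set x : Unit ⊕ Fin n → ℝ := Sum.elim (fun _ => s) v with hxdef
    have hxinr : (fun j => x (Sum.inr j)) = v := rfl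
    have hDx_inr : ∀ i, (D *ᵥ x) (Sum.inr i) = -s * a i + lA * v i := by
      intro i
      rw [hDdef, borderD_mulVec_inr, hxinr, hv]
      simp [hxdef]
      try ring
    have hq : x ⬝ᵥ (D *ᵥ x) = t * (s*s) - 2 * (s * (a ⬝ᵥ v)) + lA * (v ⬝ᵥ v) := by
      rw [dot_sum_split]
      have h1 : (fun j => (D *ᵥ x) (Sum.inr j)) = (-s) • a + lA • v := by
        funext i; rw [hDx_inr]; simp
      rw [h1, hDdef, borderD_mulVec_inl, hxinr]
      simp only [hxdef, Sum.elim_inl]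
      rw [dotProduct_add, dotProduct_smul, dotProduct_smul,
        dotProduct_comm v a]
      simp only [smul_eq_mul]
      ring
    have hxx : x ⬝ᵥ x = s * s + v ⬝ᵥ v := by
      rw [dot_sum_split, hxinr]; simp [hxdef]
    have hray := lambdaMin_rayleigh hD x
    rw [← hlD, hq, hxx] at hray
    have hxxnn : (0:ℝ) ≤ s * s + v ⬝ᵥ v := by nlinarith
    have h2 : lA * (s * s + v ⬝ᵥ v) ≤ t * (s*s) - 2 * (s * (a ⬝ᵥ v)) + lA * (v ⬝ᵥ v) := by
      calc lA * (s * s + v ⬝ᵥ v) ≤ lD * (s * s + v ⬝ᵥ v) := by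
            exact mul_le_mul_of_nonneg_right hge hxxnn
        _ ≤ _ := hray
    rw [hs2, hsav] at h2
    have hta : t - lA ≤ |t - lA| := le_abs_self _
    have habspos : (0:ℝ) < |a ⬝ᵥ v| := abs_pos.mpr hav
    nlinarith [sq_nonneg ε, mul_pos hε habspos]
  -- Step 2: eigMult D = 1
  have hmem : ∀ x : Unit ⊕ Fin n → ℝ,
      x ∈ LinearMap.ker (D - lD • (1 : Matrix (Unit ⊕ Fin n) (Unit ⊕ Fin n) ℝ)).mulVecLin
        ↔ D *ᵥ x = lD • x := by
    intro x
    rw [LinearMap.mem_ker, Matrix.mulVecLin_apply, Matrix.sub_mulVec,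
      Matrix.smul_mulVec, Matrix.one_mulVec, sub_eq_zero]
  have hker0 : ∀ x : Unit ⊕ Fin n → ℝ, D *ᵥ x = lD • x → x (Sum.inl ()) = 0 → x = 0 := by
    intro x hx h0
    have hAr : A *ᵥ (fun j => x (Sum.inr j)) = lD • (fun j => x (Sum.inr j)) := by
      funext i
      have := congrFun hx (Sum.inr i)
      rw [hDdef, borderD_mulVec_inr, h0] at this
      simpa using this
    have hr0 : (fun j => x (Sum.inr j)) = 0 := ker_trivial hA step1 hAr
    funext i
    rcases i with i | i
    · cases i; exact h0
    · exact congrFun hr0 i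
  obtain ⟨u0, hu0ne, hu0⟩ := lambdaMin_exists_eig hD
  have hu0inl : u0 (Sum.inl ()) ≠ 0 := fun h0 => hu0ne (hker0 u0 hu0 h0)
  have hKeq : LinearMap.ker (D - lD • (1 : Matrix (Unit ⊕ Fin n) (Unit ⊕ Fin n) ℝ)).mulVecLin
      = Submodule.span ℝ {u0} := by
    apply le_antisymm
    · intro x hx
      rw [hmem] at hx
      set c : ℝ := x (Sum.inl ()) / u0 (Sum.inl ()) with hcdef
      have hz : D *ᵥ (x - c • u0) = lD • (x - c • u0) := by
        rw [Matrix.mulVec_sub, Matrix.mulVec_smul, hx, hu0, hlD]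
        module
      have hzl : (x - c • u0) (Sum.inl ()) = 0 := by
        simp [hcdef, div_mul_cancel₀ _ hu0inl]
      have := hker0 _ hz hzl
      have hxc : x = c • u0 := by
        have := sub_eq_zero.mp this
        exact this
      rw [hxc]
      exact Submodule.smul_mem _ _ (Submodule.mem_span_singleton_self u0)
    · rw [Submodule.span_le, Set.singleton_subset_iff]
      rw [SetLike.mem_coe, hmem]
      exact hu0
  refine ⟨step1, ?_⟩
  unfold eigMult
  rw [← hlD, hKeq]
  exact finrank_span_singleton (K := ℝ) hu0ne
end

section
/- (Rendl–Wolkowicz eigenvalue reformulation of TRS) For A not positive definite, the optimal value of the trust-region subproblem min{ xᵀAx − 2aᵀx : ‖x‖² ≤ Δ } equals the supremum over t ∈ ℝ of (Δ + 1)·λmin(D(t)) − t subject to λmin(D(t)) ≤ 0, where D(t) = [[t, −aᵀ],[−a, A]]. -/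
open Matrix

section RWproof

set_option maxHeartbeats 1000000

namespace RWhelp

variable {ι : Type} [Fintype ι] [DecidableEq ι] [Nonempty ι]

lemma star_eq_tr (U : Matrix ι ι ℝ) : star U = Uᵀ := by
  rw [Matrix.star_eq_conjTranspose]; ext i j; simp [conjTranspose_apply]

omit [DecidableEq ι] [Nonempty ι] in
lemma dp_self_pos {v : ι → ℝ} (hv : v ≠ 0) : 0 < v ⬝ᵥ v := by
  rcases lt_or_eq_of_le (Finset.sum_nonneg fun i _ => mul_self_nonneg (v i) : (0:ℝ) ≤ v ⬝ᵥ v) with h | h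
  · exact h
  · exact absurd ((dotProduct_self_eq_zero).mp h.symm) hv

lemma quad_expand {M : Matrix ι ι ℝ} (hM : M.IsHermitian) (y : ι → ℝ) :
    y ⬝ᵥ M *ᵥ y = ∑ i, hM.eigenvalues i * ((star (hM.eigenvectorUnitary : Matrix ι ι ℝ) *ᵥ y) i)^2 := by
  set U := (hM.eigenvectorUnitary : Matrix ι ι ℝ) with hU
  set z := star U *ᵥ y with hz
  have h1 : M = U * diagonal (RCLike.ofReal ∘ hM.eigenvalues) * star U := hM.spectral_theorem
  have hD : (RCLike.ofReal ∘ hM.eigenvalues : ι → ℝ) = hM.eigenvalues := by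
    funext i; simp
  rw [hD] at h1
  have step1 : y ⬝ᵥ M *ᵥ y = z ⬝ᵥ (diagonal hM.eigenvalues *ᵥ z) := by
    conv_lhs => rw [h1]
    rw [← mulVec_mulVec, ← mulVec_mulVec, dotProduct_mulVec, hz, star_eq_tr, mulVec_transpose]
  rw [step1]
  simp only [dotProduct, mulVec_diagonal]
  congr 1; funext i; ring

lemma dp_eq {M : Matrix ι ι ℝ} (hM : M.IsHermitian) (y : ι → ℝ) :
    (star (hM.eigenvectorUnitary : Matrix ι ι ℝ) *ᵥ y) ⬝ᵥ (star (hM.eigenvectorUnitary : Matrix ι ι ℝ) *ᵥ y) = y ⬝ᵥ y := by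
  set U := (hM.eigenvectorUnitary : Matrix ι ι ℝ) with hU
  have hUU : U * star U = 1 := (Matrix.mem_unitaryGroup_iff).mp hM.eigenvectorUnitary.2
  conv_lhs => rw [star_eq_tr, mulVec_transpose]
  rw [← dotProduct_mulVec, ← mulVec_transpose, ← star_eq_tr, mulVec_mulVec, hUU, one_mulVec]

lemma eig_mem {M : Matrix ι ι ℝ} (hM : M.IsHermitian) (i : ι) :
    hM.eigenvalues i ∈ {μ : ℝ | ∃ v : ι → ℝ, v ≠ 0 ∧ M.mulVec v = μ • v} := by
  refine ⟨⇑(hM.eigenvectorBasis i), ?_, hM.mulVec_eigenvectorBasis i⟩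
  intro h0
  have h1 : hM.eigenvectorBasis i = 0 := by
    apply PiLp.ext; intro j; exact congrFun h0 j
  have h2 := hM.eigenvectorBasis.orthonormal.1 i
  rw [h1, norm_zero] at h2; norm_num at h2

lemma lambdaMin_quad {M : Matrix ι ι ℝ} (hM : M.IsHermitian) (y : ι → ℝ) :
    lambdaMin M * (y ⬝ᵥ y) ≤ y ⬝ᵥ M *ᵥ y := by
  obtain ⟨i₀, -, hi₀⟩ := Finset.exists_min_image Finset.univ hM.eigenvalues
    ⟨Classical.arbitrary ι, Finset.mem_univ _⟩
  have hquad : ∀ w : ι → ℝ, hM.eigenvalues i₀ * (w ⬝ᵥ w) ≤ w ⬝ᵥ M *ᵥ w := by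
    intro w
    rw [quad_expand hM w, ← dp_eq hM w]
    set z := star (hM.eigenvectorUnitary : Matrix ι ι ℝ) *ᵥ w
    rw [dotProduct, Finset.mul_sum]
    refine Finset.sum_le_sum fun i _ => ?_
    have hzz : z i * z i = (z i)^2 := by ring
    rw [hzz]
    exact mul_le_mul_of_nonneg_right (hi₀ i (Finset.mem_univ i)) (sq_nonneg _)
  have hlb : ∀ μ ∈ {μ : ℝ | ∃ v : ι → ℝ, v ≠ 0 ∧ M.mulVec v = μ • v}, hM.eigenvalues i₀ ≤ μ := by
    rintro μ ⟨v, hv, heq⟩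
    have h1 : hM.eigenvalues i₀ * (v ⬝ᵥ v) ≤ μ * (v ⬝ᵥ v) := by
      have := hquad v
      rwa [heq, dotProduct_smul, smul_eq_mul] at this
    exact le_of_mul_le_mul_right h1 (dp_self_pos hv)
  have hmin : lambdaMin M = hM.eigenvalues i₀ :=
    le_antisymm (csInf_le ⟨_, hlb⟩ (eig_mem hM i₀)) (le_csInf ⟨_, eig_mem hM i₀⟩ hlb)
  rw [hmin]; exact hquad y

omit [DecidableEq ι] [Nonempty ι] in
lemma lambdaMin_eq_of {M : Matrix ι ι ℝ} {c : ℝ} {v : ι → ℝ}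
    (hpsd : ∀ y : ι → ℝ, c * (y ⬝ᵥ y) ≤ y ⬝ᵥ M *ᵥ y)
    (hv : v ≠ 0) (heig : M *ᵥ v = c • v) : lambdaMin M = c := by
  have hlb : ∀ μ ∈ {μ : ℝ | ∃ w : ι → ℝ, w ≠ 0 ∧ M.mulVec w = μ • w}, c ≤ μ := by
    rintro μ ⟨w, hw, heq⟩
    have h1 : c * (w ⬝ᵥ w) ≤ μ * (w ⬝ᵥ w) := by
      have := hpsd w
      rwa [heq, dotProduct_smul, smul_eq_mul] at this
    exact le_of_mul_le_mul_right h1 (dp_self_pos hw)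
  exact le_antisymm (csInf_le ⟨c, hlb⟩ ⟨v, hv, heig⟩) (le_csInf ⟨c, v, hv, heig⟩ hlb)

lemma borderD_herm {n : ℕ} {A : Matrix (Fin n) (Fin n) ℝ} (hA : A.IsHermitian)
    (a : Fin n → ℝ) (t : ℝ) : (borderD A a t).IsHermitian := by
  unfold Matrix.IsHermitian at hA ⊢
  ext i j
  rcases i with i | i <;> rcases j with j | j <;>
    simp [borderD, conjTranspose_apply, fromBlocks]
  have := congrFun (congrFun hA i) j
  simpa [conjTranspose_apply] using this

lemma borderD_quad {n : ℕ} (A : Matrix (Fin n) (Fin n) ℝ) (a : Fin n → ℝ) (t : ℝ)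
    (c : Unit → ℝ) (z : Fin n → ℝ) :
    (Sum.elim c z) ⬝ᵥ (borderD A a t) *ᵥ (Sum.elim c z)
      = t * (c ())^2 - 2 * (c ()) * (a ⬝ᵥ z) + z ⬝ᵥ A *ᵥ z := by
  rw [borderD, fromBlocks_mulVec, sumElim_dotProduct_sumElim]
  simp only [dotProduct, mulVec, of_apply, Pi.add_apply, Sum.elim_comp_inl, Sum.elim_comp_inr,
    Finset.univ_unique, Finset.sum_singleton]
  have h1 : ∀ i, z i * (-a i * c default + ∑ j, A i j * z j)
      = -(c default * (a i * z i)) + z i * ∑ j, A i j * z j := fun i => by ring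
  rw [Finset.sum_congr rfl (fun i _ => h1 i), Finset.sum_add_distrib, Finset.sum_neg_distrib,
    ← Finset.mul_sum]
  have h3 : (∑ x, -a x * z x) = -∑ x, a x * z x := by
    rw [← Finset.sum_neg_distrib]; exact Finset.sum_congr rfl fun i _ => by ring
  have hc : c default = c () := rfl
  rw [hc, h3]; ring

lemma sym_dp {n : ℕ} {A : Matrix (Fin n) (Fin n) ℝ} (hA : A.IsHermitian)
    (x w : Fin n → ℝ) : x ⬝ᵥ A *ᵥ w = w ⬝ᵥ A *ᵥ x := by
  have hAt : Aᵀ = A := by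
    ext i j
    have := congrFun (congrFun hA i) j
    simpa [conjTranspose_apply] using this
  rw [dotProduct_mulVec, ← mulVec_transpose, hAt, dotProduct_comm]

lemma dp_expand {n : ℕ} (x w : Fin n → ℝ) (s : ℝ) :
    (x + s • w) ⬝ᵥ (x + s • w) = x ⬝ᵥ x + 2*s*(x ⬝ᵥ w) + s^2*(w ⬝ᵥ w) := by
  simp only [dotProduct_add, add_dotProduct, dotProduct_smul, smul_dotProduct, smul_eq_mul]
  rw [dotProduct_comm w x]; ring

lemma objq_expand {n : ℕ} {A : Matrix (Fin n) (Fin n) ℝ} (hA : A.IsHermitian)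
    (a x w : Fin n → ℝ) (s : ℝ) :
    objQ A a (x + s • w) = objQ A a x + 2*s*(w ⬝ᵥ A *ᵥ x - a ⬝ᵥ w) + s^2*(w ⬝ᵥ A *ᵥ w) := by
  unfold objQ
  simp only [mulVec_add, mulVec_smul, dotProduct_add, add_dotProduct, dotProduct_smul,
    smul_dotProduct, smul_eq_mul]
  rw [sym_dp hA x w]; ring

lemma objq_combo {n : ℕ} {A : Matrix (Fin n) (Fin n) ℝ} (hA : A.IsHermitian)
    (a x u : Fin n → ℝ) (α β : ℝ) :
    objQ A a (α • x + β • u) = α^2*(x ⬝ᵥ A *ᵥ x) + 2*α*β*(u ⬝ᵥ A *ᵥ x) + β^2*(u ⬝ᵥ A *ᵥ u)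
      - 2*(α*(a ⬝ᵥ x) + β*(a ⬝ᵥ u)) := by
  unfold objQ
  simp only [mulVec_add, mulVec_smul, dotProduct_add, add_dotProduct, dotProduct_smul,
    smul_dotProduct, smul_eq_mul]
  rw [sym_dp hA x u]; ring

lemma dp_combo {n : ℕ} (x u : Fin n → ℝ) (α β : ℝ) :
    (α • x + β • u) ⬝ᵥ (α • x + β • u)
      = α^2*(x ⬝ᵥ x) + 2*α*β*(x ⬝ᵥ u) + β^2*(u ⬝ᵥ u) := by
  simp only [dotProduct_add, add_dotProduct, dotProduct_smul, smul_dotProduct, smul_eq_mul]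
  rw [dotProduct_comm u x]; ring

end RWhelp


namespace RWhelp

lemma npd_witness {n : ℕ} {A : Matrix (Fin n) (Fin n) ℝ} (hA : A.IsHermitian)
    (h : ¬ A.PosDef) : ∃ w : Fin n → ℝ, w ≠ 0 ∧ w ⬝ᵥ A *ᵥ w ≤ 0 := by
  rw [Matrix.posDef_iff_dotProduct_mulVec] at h
  push_neg at h
  obtain ⟨w, hw, hle⟩ := h hA
  exact ⟨w, hw, by simpa using hle⟩

lemma dp_continuous {n : ℕ} : Continuous (fun x : Fin n → ℝ => x ⬝ᵥ x) := by
  unfold dotProduct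
  exact continuous_finset_sum _ fun i _ => (continuous_apply i).mul (continuous_apply i)

lemma objQ_continuous {n : ℕ} (A : Matrix (Fin n) (Fin n) ℝ) (a : Fin n → ℝ) :
    Continuous (objQ A a) := by
  unfold objQ dotProduct mulVec dotProduct
  apply Continuous.sub
  · exact continuous_finset_sum _ fun i _ => (continuous_apply i).mul
      (continuous_finset_sum _ fun j _ => continuous_const.mul (continuous_apply j))
  · exact continuous_const.mul
      (continuous_finset_sum _ fun i _ => continuous_const.mul (continuous_apply i))

lemma exists_ball_min {n : ℕ} (A : Matrix (Fin n) (Fin n) ℝ) (a : Fin n → ℝ) {Δ : ℝ}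
    (hΔ : 0 < Δ) : ∃ x : Fin n → ℝ, x ⬝ᵥ x ≤ Δ ∧
      ∀ y : Fin n → ℝ, y ⬝ᵥ y ≤ Δ → objQ A a x ≤ objQ A a y := by
  set K : Set (Fin n → ℝ) := {x | x ⬝ᵥ x ≤ Δ} with hK
  have hclosed : IsClosed K := isClosed_le dp_continuous continuous_const
  have hbdd : Bornology.IsBounded K := by
    apply (Metric.isBounded_closedBall (x := (0 : Fin n → ℝ)) (r := Real.sqrt Δ)).subset
    intro x hx
    simp only [Metric.mem_closedBall, dist_zero_right]
    rcases isEmpty_or_nonempty (Fin n) with hemp | hne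
    · have hx0 : x = 0 := funext fun i => absurd (Finset.mem_univ i) (by simp [hemp.false i])
      simp [hx0, Real.sqrt_nonneg]
    · rw [pi_norm_le_iff_of_nonneg (Real.sqrt_nonneg Δ)]
      intro i
      rw [Real.norm_eq_abs, ← Real.sqrt_sq_eq_abs]
      apply Real.sqrt_le_sqrt
      have h1 : (x i)^2 ≤ x ⬝ᵥ x := by
        rw [dotProduct]
        have : (x i)^2 = x i * x i := sq (x i) ▸ by ring
        rw [this]
        exact Finset.single_le_sum (fun j _ => mul_self_nonneg (x j)) (Finset.mem_univ i)
      exact h1.trans hx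
  have hcpt : IsCompact K := Metric.isCompact_of_isClosed_isBounded hclosed hbdd
  have hne : K.Nonempty := ⟨0, by simp [hK, dotProduct, hΔ.le]⟩
  obtain ⟨x, hxK, hmin⟩ := hcpt.exists_isMinOn hne (objQ_continuous A a).continuousOn
  exact ⟨x, hxK, fun y hy => hmin hy⟩

end RWhelp


namespace RWhelp

lemma exists_sphere_min {n : ℕ} {A : Matrix (Fin n) (Fin n) ℝ} (hA : A.IsHermitian)
    (hnpd : ¬ A.PosDef) (a : Fin n → ℝ) {Δ : ℝ} (hΔ : 0 < Δ) :
    ∃ x : Fin n → ℝ, x ⬝ᵥ x = Δ ∧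
      ∀ y : Fin n → ℝ, y ⬝ᵥ y ≤ Δ → objQ A a x ≤ objQ A a y := by
  obtain ⟨xb, hxb, hmin⟩ := exists_ball_min A a hΔ
  obtain ⟨w, hw0, hwA⟩ := npd_witness hA hnpd
  set β := w ⬝ᵥ A *ᵥ xb - a ⬝ᵥ w with hβ
  set w' : Fin n → ℝ := if β ≤ 0 then w else -w with hw'
  have hw'0 : w' ≠ 0 := by
    rw [hw']; split
    · exact hw0
    · intro h; exact hw0 (by rw [← neg_neg w, h, neg_zero])
  have hw'A : w' ⬝ᵥ A *ᵥ w' ≤ 0 := by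
    rw [hw']; split
    · exact hwA
    · rwa [mulVec_neg, dotProduct_neg, neg_dotProduct, neg_neg]
  have hβ' : w' ⬝ᵥ A *ᵥ xb - a ⬝ᵥ w' ≤ 0 := by
    rw [hw']; split
    · assumption
    · rw [neg_dotProduct, dotProduct_neg]
      push_neg at *; linarith
  have hobj : ∀ s : ℝ, 0 ≤ s → objQ A a (xb + s • w') ≤ objQ A a xb := by
    intro s hs
    rw [objq_expand hA]
    nlinarith [sq_nonneg s]
  set f : ℝ → ℝ := fun s => (xb + s • w') ⬝ᵥ (xb + s • w') with hf
  have hfe : ∀ s, f s = xb ⬝ᵥ xb + 2*s*(xb ⬝ᵥ w') + s^2*(w' ⬝ᵥ w') := fun s => dp_expand xb w' s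
  set c1 := xb ⬝ᵥ xb; set c2 := xb ⬝ᵥ w'; set c3 := w' ⬝ᵥ w' with hc3
  have hc3pos : 0 < c3 := dp_self_pos hw'0
  have hc1 : 0 ≤ c1 := by
    have h : c1 = ∑ i, xb i * xb i := rfl
    rw [h]; exact Finset.sum_nonneg fun i _ => mul_self_nonneg _
  set S := max 1 ((2*|c2| + Δ + 1)/c3) with hS
  have hS1 : (1:ℝ) ≤ S := le_max_left _ _
  have hS0 : (0:ℝ) ≤ S := by linarith
  have hSc : 2*|c2| + Δ + 1 ≤ S * c3 := by
    rw [← div_le_iff₀ hc3pos]; exact le_max_right _ _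
  have hfS : Δ ≤ f S := by
    rw [hfe]
    nlinarith [abs_nonneg c2, neg_abs_le c2, le_abs_self c2]
  have hg : Continuous (fun s : ℝ => xb + s • w') :=
    continuous_const.add (continuous_id.smul continuous_const)
  have hcont : Continuous f := dp_continuous.comp hg
  have hf0 : f 0 = c1 := by rw [hfe]; ring
  obtain ⟨s₀, hs₀mem, hfs₀⟩ := intermediate_value_Icc hS0 hcont.continuousOn
    ⟨by rw [hf0]; exact hxb, hfS⟩
  exact ⟨xb + s₀ • w', hfs₀, fun y hy => (hobj s₀ hs₀mem.1).trans (hmin y hy)⟩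

end RWhelp


namespace RWhelp

lemma lambdaMin_borderD {n : ℕ} {A : Matrix (Fin n) (Fin n) ℝ} (hA : A.IsHermitian)
    {a x : Fin n → ℝ} {μ Δ : ℝ} (hxΔ : x ⬝ᵥ x = Δ)
    (ha : a = A *ᵥ x + μ • x)
    (hpsd : ∀ d : Fin n → ℝ, 0 ≤ d ⬝ᵥ A *ᵥ d + μ * (d ⬝ᵥ d)) :
    lambdaMin (borderD A a (a ⬝ᵥ x - μ)) = -μ := by
  set t : ℝ := a ⬝ᵥ x - μ with htdef
  set v : Unit ⊕ Fin n → ℝ := Sum.elim (fun _ => (1:ℝ)) x with hv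
  have hax : a ⬝ᵥ x = x ⬝ᵥ A *ᵥ x + μ * Δ := by
    rw [ha, add_dotProduct, smul_dotProduct, smul_eq_mul, hxΔ,
      dotProduct_comm (A *ᵥ x) x]
  have hvne : v ≠ 0 := by
    intro h
    have := congrFun h (Sum.inl ())
    simp [hv] at this
  have heig : (borderD A a t) *ᵥ v = (-μ) • v := by
    rw [hv, borderD, fromBlocks_mulVec]
    funext i
    cases i with
    | inl u =>
      simp only [Sum.elim_inl, Pi.add_apply, Pi.smul_apply, smul_eq_mul]
      simp only [mulVec, dotProduct, of_apply, Finset.univ_unique, Finset.sum_singleton,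
        Sum.elim_comp_inl, Sum.elim_comp_inr, Sum.elim_inl, Sum.elim_inr]
      have hsum : (∑ j, -a j * x j) = -(a ⬝ᵥ x) := by
        simp [dotProduct, neg_mul]
      rw [hsum]
      simp [htdef]
      ring
    | inr i =>
      simp only [Sum.elim_inr, Pi.add_apply, Pi.smul_apply, smul_eq_mul]
      simp only [mulVec, dotProduct, of_apply, Finset.univ_unique, Finset.sum_singleton,
        Sum.elim_comp_inl, Sum.elim_comp_inr, Sum.elim_inl, Sum.elim_inr]
      have h1 : (A *ᵥ x) i = ∑ j, A i j * x j := rfl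
      have h2 := congrFun ha i
      simp only [Pi.add_apply, Pi.smul_apply, smul_eq_mul] at h2
      rw [← h1]
      rw [h2]; ring
  have hpsdD : ∀ y : Unit ⊕ Fin n → ℝ, (-μ) * (y ⬝ᵥ y) ≤ y ⬝ᵥ (borderD A a t) *ᵥ y := by
    intro y
    have hysplit : y = Sum.elim (y ∘ Sum.inl) (y ∘ Sum.inr) := by
      funext i; cases i <;> rfl
    set cc : Unit → ℝ := y ∘ Sum.inl with hcc
    set z : Fin n → ℝ := y ∘ Sum.inr with hz
    rw [hysplit, borderD_quad, sumElim_dotProduct_sumElim]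
    have hccc : cc ⬝ᵥ cc = cc () * cc () := by
      simp [dotProduct]
    rw [hccc]
    set c0 : ℝ := cc ()
    have hkey := hpsd (z - c0 • x)
    have hexp1 : (z - c0 • x) ⬝ᵥ A *ᵥ (z - c0 • x)
        = z ⬝ᵥ A *ᵥ z - 2*c0*(x ⬝ᵥ A *ᵥ z) + c0^2*(x ⬝ᵥ A *ᵥ x) := by
      rw [mulVec_sub, mulVec_smul, dotProduct_sub, sub_dotProduct, sub_dotProduct,
        dotProduct_smul, smul_dotProduct, smul_dotProduct, dotProduct_smul,
        sym_dp hA z x]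
      simp only [smul_eq_mul]; ring
    have hexp2 : (z - c0 • x) ⬝ᵥ (z - c0 • x) = z ⬝ᵥ z - 2*c0*(x ⬝ᵥ z) + c0^2*Δ := by
      simp only [dotProduct_sub, sub_dotProduct, dotProduct_smul, smul_dotProduct, smul_eq_mul]
      rw [dotProduct_comm z x, hxΔ]; ring
    have haz : a ⬝ᵥ z = x ⬝ᵥ A *ᵥ z + μ * (x ⬝ᵥ z) := by
      rw [ha, add_dotProduct, smul_dotProduct, smul_eq_mul,
        dotProduct_comm (A *ᵥ x) z, ← sym_dp hA x z]
    rw [hexp1, hexp2] at hkey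
    rw [htdef, hax]
    have haz2 : 2*c0*(a ⬝ᵥ z) = 2*c0*(x ⬝ᵥ A *ᵥ z) + 2*c0*μ*(x ⬝ᵥ z) := by rw [haz]; ring
    nlinarith [hkey, haz2]
  exact lambdaMin_eq_of hpsdD hvne heig

end RWhelp


namespace RWhelp

lemma exists_multiplier {n : ℕ} {A : Matrix (Fin n) (Fin n) ℝ} (hA : A.IsHermitian)
    (a : Fin n → ℝ) {Δ : ℝ} (hΔ : 0 < Δ) {x : Fin n → ℝ} (hxΔ : x ⬝ᵥ x = Δ)
    (hmin : ∀ y : Fin n → ℝ, y ⬝ᵥ y ≤ Δ → objQ A a x ≤ objQ A a y) :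
    ∃ μ : ℝ, a = A *ᵥ x + μ • x := by
  set g : Fin n → ℝ := A *ᵥ x - a with hg
  set μ : ℝ := -(g ⬝ᵥ x)/Δ with hμ
  set w0 : Fin n → ℝ := g + μ • x with hw0def
  suffices hw0 : w0 = 0 by
    refine ⟨μ, ?_⟩
    have hw0' : g + μ • x = 0 := by rw [← hw0def]; exact hw0
    have h1 : g = -(μ • x) := eq_neg_of_add_eq_zero_left hw0'
    have h2 : A *ᵥ x - a = -(μ • x) := by rw [← hg]; exact h1
    funext i
    have := congrFun h2 i
    simp only [Pi.sub_apply, Pi.neg_apply, Pi.add_apply, Pi.smul_apply, smul_eq_mul,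
      neg_smul] at this ⊢
    linarith
  by_contra hw0ne
  have hgxμ : g ⬝ᵥ x + μ * Δ = 0 := by
    rw [hμ]; field_simp; ring
  have hw0x : w0 ⬝ᵥ x = 0 := by
    rw [hw0def, add_dotProduct, smul_dotProduct, hxΔ, smul_eq_mul]; exact hgxμ
  set E : ℝ := w0 ⬝ᵥ w0 with hE
  have hEpos : 0 < E := dp_self_pos hw0ne
  set r : ℝ := Real.sqrt (Δ/E) with hr
  have hrpos : 0 < r := Real.sqrt_pos.mpr (div_pos hΔ hEpos)
  have hr2 : r^2 = Δ/E := Real.sq_sqrt (div_pos hΔ hEpos).le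
  set u : Fin n → ℝ := r • w0 with hu
  have huu : u ⬝ᵥ u = Δ := by
    rw [hu, smul_dotProduct, dotProduct_smul, smul_eq_mul, smul_eq_mul, ← mul_assoc, ← sq, hr2]
    field_simp; exact hE.symm
  have hux : u ⬝ᵥ x = 0 := by
    rw [hu, smul_dotProduct, smul_eq_mul, hw0x, mul_zero]
  have hgw0 : g ⬝ᵥ w0 = E := by
    have h1 : E = g ⬝ᵥ w0 + μ * (x ⬝ᵥ w0) := by
      rw [hE]; nth_rewrite 1 [hw0def]
      rw [add_dotProduct, smul_dotProduct, smul_eq_mul]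
    have h2 : x ⬝ᵥ w0 = 0 := by rw [dotProduct_comm]; exact hw0x
    rw [h2, mul_zero, add_zero] at h1; exact h1.symm
  set p1 := x ⬝ᵥ A *ᵥ x; set p2 := u ⬝ᵥ A *ᵥ x with hp2
  set p3 := u ⬝ᵥ A *ᵥ u; set p4 := a ⬝ᵥ x; set p5 := a ⬝ᵥ u with hp5
  set K0 : ℝ := r * E with hK0
  have hK0pos : 0 < K0 := mul_pos hrpos hEpos
  have hp25 : p2 - p5 = K0 := by
    have h1 : g ⬝ᵥ u = r * E := by
      rw [hu, dotProduct_smul, smul_eq_mul, hgw0]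
    have h2 : g ⬝ᵥ u = (A *ᵥ x) ⬝ᵥ u - a ⬝ᵥ u := by rw [hg, sub_dotProduct]
    have h3 : (A *ᵥ x) ⬝ᵥ u = p2 := by rw [dotProduct_comm, hp2]
    rw [h2, h3, ← hp5] at h1
    rw [hK0]; exact h1
  -- key inequality for all s
  have key : ∀ s : ℝ, 0 ≤ 4*(s*(p2-p5) + s^2*(p3-p1+p4) + s^3*(-p2-p5) + s^4*p4) := by
    intro s
    have hden : (0:ℝ) < 1 + s^2 := by positivity
    set α : ℝ := (1-s^2)/(1+s^2) with hα
    set β : ℝ := 2*s/(1+s^2) with hβ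
    set y : Fin n → ℝ := α • x + β • u with hy
    have hyy : y ⬝ᵥ y ≤ Δ := by
      rw [hy, dp_combo, hxΔ, huu]
      have hxu : x ⬝ᵥ u = 0 := by rw [dotProduct_comm]; exact hux
      rw [hxu]
      have hab : α^2 + β^2 = 1 := by rw [hα, hβ]; field_simp; ring
      nlinarith
    have hq := hmin y hyy
    rw [hy, objq_combo hA] at hq
    have hqx : objQ A a x = p1 - 2*p4 := by unfold objQ; ring
    rw [hqx] at hq
    have hfs : 0 ≤ α^2*p1 + 2*α*β*p2 + β^2*p3 - 2*(α*p4 + β*p5) - (p1 - 2*p4) := by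
      linarith
    have hfac : (1+s^2)^2 * (α^2*p1 + 2*α*β*p2 + β^2*p3 - 2*(α*p4 + β*p5) - (p1 - 2*p4))
        = 4*(s*(p2-p5) + s^2*(p3-p1+p4) + s^3*(-p2-p5) + s^4*p4) := by
      rw [hα, hβ]; field_simp; ring
    calc (0:ℝ) ≤ (1+s^2)^2 * (α^2*p1 + 2*α*β*p2 + β^2*p3 - 2*(α*p4 + β*p5) - (p1 - 2*p4)) :=
          mul_nonneg (by positivity) hfs
      _ = _ := hfac
  -- choose a small negative s to get a contradiction
  set c2 : ℝ := p3 - p1 + p4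
  set c3 : ℝ := p2 + p5
  set c4 : ℝ := p4
  set C : ℝ := |c2| + |c3| + |c4| with hC
  have hCpos : 0 < C + 1 := by positivity
  set ε : ℝ := min 1 (K0/(C+1)) with hε
  have hεpos : 0 < ε := lt_min one_pos (div_pos hK0pos hCpos)
  have hε1 : ε ≤ 1 := min_le_left _ _
  have hεC : ε * (C+1) ≤ K0 := by
    rw [← le_div_iff₀ hCpos]; exact min_le_right _ _
  have hkey := key (-ε)
  have hexp : 4*((-ε)*(p2-p5) + (-ε)^2*(p3-p1+p4) + (-ε)^3*(-p2-p5) + (-ε)^4*p4)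
      = 4*(-(ε*K0) + ε^2*c2 + ε^3*c3 + ε^4*c4) := by
    rw [hp25]; ring
  rw [hexp] at hkey
  have h2 : ε^2*c2 ≤ ε^2*|c2| := mul_le_mul_of_nonneg_left (le_abs_self _) (sq_nonneg ε)
  have e2 : 0 ≤ ε^2 - ε^3 := by nlinarith [sq_nonneg ε]
  have e3 : 0 ≤ ε^2 - ε^4 := by nlinarith [sq_nonneg ε, sq_nonneg (ε^2)]
  have h3 : ε^3*c3 ≤ ε^2*|c3| := by
    nlinarith [mul_nonneg e2 (abs_nonneg c3),
      mul_nonneg (pow_nonneg hεpos.le 3) (sub_nonneg.mpr (le_abs_self c3))]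
  have h4 : ε^4*c4 ≤ ε^2*|c4| := by
    nlinarith [mul_nonneg e3 (abs_nonneg c4),
      mul_nonneg (pow_nonneg hεpos.le 4) (sub_nonneg.mpr (le_abs_self c4))]
  have hC2 : ε^2*|c2| + ε^2*|c3| + ε^2*|c4| = ε^2*C := by rw [hC]; ring
  have hfin : ε^2*C < ε*K0 := by
    have hεCK : ε*C < K0 := by nlinarith
    calc ε^2*C = ε*(ε*C) := by ring
      _ < ε*K0 := by exact mul_lt_mul_of_pos_left hεCK hεpos
  linarith

end RWhelp


namespace RWhelp

lemma psd_of_min {n : ℕ} {A : Matrix (Fin n) (Fin n) ℝ} (hA : A.IsHermitian)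
    {a : Fin n → ℝ} {Δ : ℝ} (hΔ : 0 < Δ) {x : Fin n → ℝ} {μ : ℝ}
    (hxΔ : x ⬝ᵥ x = Δ)
    (hmin : ∀ y : Fin n → ℝ, y ⬝ᵥ y ≤ Δ → objQ A a x ≤ objQ A a y)
    (hμ : a = A *ᵥ x + μ • x) :
    ∀ d : Fin n → ℝ, 0 ≤ d ⬝ᵥ A *ᵥ d + μ * (d ⬝ᵥ d) := by
  have hkey : ∀ d : Fin n → ℝ, (x + d) ⬝ᵥ (x + d) = Δ → 0 ≤ d ⬝ᵥ A *ᵥ d + μ * (d ⬝ᵥ d) := by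
    intro d hyd
    have h1 : x + d = x + (1:ℝ) • d := by simp
    have h2 := hmin (x + d) (le_of_eq hyd)
    rw [h1, objq_expand hA] at h2
    have had : a ⬝ᵥ d = d ⬝ᵥ A *ᵥ x + μ * (x ⬝ᵥ d) := by
      rw [hμ, add_dotProduct, smul_dotProduct, smul_eq_mul, dotProduct_comm (A *ᵥ x) d]
    have hxd : 2 * (x ⬝ᵥ d) + d ⬝ᵥ d = 0 := by
      have := dp_expand x d 1
      rw [one_smul] at this
      rw [this] at hyd
      nlinarith [hxΔ]
    have hxd' : x ⬝ᵥ d = -(d ⬝ᵥ d)/2 := by linarith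
    have hprod : μ*(x ⬝ᵥ d) = -(μ*(d ⬝ᵥ d))/2 := by rw [hxd']; ring
    nlinarith [h2, had, hprod]
  have hgen : ∀ e : Fin n → ℝ, e ⬝ᵥ x ≠ 0 → 0 ≤ e ⬝ᵥ A *ᵥ e + μ * (e ⬝ᵥ e) := by
    intro e hex
    have he0 : e ≠ 0 := by
      intro h; apply hex; rw [h, zero_dotProduct]
    have hD2 : 0 < e ⬝ᵥ e := dp_self_pos he0
    set s : ℝ := -2*(x ⬝ᵥ e)/(e ⬝ᵥ e) with hs
    have hxe : x ⬝ᵥ e ≠ 0 := by rwa [dotProduct_comm x e]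
    have hs0 : s ≠ 0 := by
      rw [hs]
      exact div_ne_zero (mul_ne_zero (by norm_num) hxe) (ne_of_gt hD2)
    have hfeas : (x + s • e) ⬝ᵥ (x + s • e) = Δ := by
      rw [dp_expand, hxΔ, hs]
      field_simp; ring
    have := hkey (s • e) hfeas
    rw [smul_dotProduct, dotProduct_smul, mulVec_smul, dotProduct_smul, smul_dotProduct] at this
    simp only [smul_eq_mul] at this
    have hs2 : 0 < s^2 := by positivity
    nlinarith [this]
  intro d
  by_cases hdx : d ⬝ᵥ x ≠ 0
  · exact hgen d hdx
  push_neg at hdx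
  -- d ⬝ᵥ x = 0 : perturb by t • x
  set Q0 : ℝ := d ⬝ᵥ A *ᵥ d + μ * (d ⬝ᵥ d) with hQ0
  set b : ℝ := x ⬝ᵥ A *ᵥ d with hb
  set c : ℝ := x ⬝ᵥ A *ᵥ x + μ * Δ with hc
  have hall : ∀ t : ℝ, t ≠ 0 → 0 ≤ Q0 + 2*t*b + t^2*c := by
    intro t ht
    have hdtx : (d + t • x) ⬝ᵥ x = t * Δ := by
      rw [add_dotProduct, smul_dotProduct, hdx, smul_eq_mul, hxΔ, zero_add]
    have hne : (d + t • x) ⬝ᵥ x ≠ 0 := by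
      rw [hdtx]; exact mul_ne_zero ht (ne_of_gt hΔ)
    have h1 := hgen (d + t • x) hne
    have hexp1 : (d + t • x) ⬝ᵥ A *ᵥ (d + t • x)
        = d ⬝ᵥ A *ᵥ d + 2*t*(x ⬝ᵥ A *ᵥ d) + t^2*(x ⬝ᵥ A *ᵥ x) := by
      rw [mulVec_add, mulVec_smul, dotProduct_add, add_dotProduct, add_dotProduct,
        dotProduct_smul, smul_dotProduct, smul_dotProduct, dotProduct_smul,
        sym_dp hA d x]
      simp only [smul_eq_mul]; ring
    have hexp2 : (d + t • x) ⬝ᵥ (d + t • x) = d ⬝ᵥ d + t^2*Δ := by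
      rw [dp_expand d x t, hdx, hxΔ]; ring
    rw [hexp1, hexp2] at h1
    rw [hQ0, hb, hc]; nlinarith [h1]
  by_contra hneg
  push_neg at hneg
  have hQ0' : 0 < -Q0 := by linarith
  set t : ℝ := Real.sqrt (-Q0/(2*(|c|+1))) with ht
  have habs : 0 < |c| + 1 := by positivity
  have htpos : 0 < t := Real.sqrt_pos.mpr (by positivity)
  have ht2 : t^2 = -Q0/(2*(|c|+1)) := Real.sq_sqrt (by positivity)
  have h1 := hall t (ne_of_gt htpos)
  have h2 := hall (-t) (neg_ne_zero.mpr (ne_of_gt htpos))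
  have h3 : 0 ≤ Q0 + t^2*c := by nlinarith [h1, h2]
  have h4 : t^2*c ≤ t^2*(|c|+1) := by
    have := le_abs_self c
    nlinarith [sq_nonneg t]
  have h5 : t^2*(|c|+1) = -Q0/2 := by
    rw [ht2]; field_simp
  linarith

end RWhelp


namespace RWhelp

lemma weak_dual {n : ℕ} {A : Matrix (Fin n) (Fin n) ℝ} (hA : A.IsHermitian)
    (a : Fin n → ℝ) {Δ t : ℝ} {x : Fin n → ℝ}
    (hlm : lambdaMin (borderD A a t) ≤ 0) (hx : x ⬝ᵥ x ≤ Δ) :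
    (Δ + 1) * lambdaMin (borderD A a t) - t ≤ objQ A a x := by
  set lam := lambdaMin (borderD A a t) with hlam
  set y : Unit ⊕ Fin n → ℝ := Sum.elim (fun _ => (1:ℝ)) x with hy
  have hq := lambdaMin_quad (borderD_herm hA a t) y
  rw [← hlam] at hq
  have hyy : y ⬝ᵥ y = 1 + x ⬝ᵥ x := by
    rw [hy, sumElim_dotProduct_sumElim]
    congr 1
    simp [dotProduct]
  have hyDy : y ⬝ᵥ (borderD A a t) *ᵥ y = t - 2*(a ⬝ᵥ x) + x ⬝ᵥ A *ᵥ x := by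
    rw [hy, borderD_quad]; ring
  rw [hyy, hyDy] at hq
  have hmono : lam * (Δ + 1) ≤ lam * (1 + x ⬝ᵥ x) :=
    mul_le_mul_of_nonpos_left (by linarith) hlm
  unfold objQ
  linarith

end RWhelp


open RWhelp

/-- The Rendl–Wolkowicz eigenvalue reformulation of TRS. -/
theorem stmt5 {n : ℕ} (hn : 1 ≤ n) (A : Matrix (Fin n) (Fin n) ℝ) (hA : A.IsHermitian)
    (hnpd : ¬ A.PosDef) (a : Fin n → ℝ) (Δ : ℝ) (hΔ : 0 < Δ) :
    sInf {v : ℝ | ∃ x : Fin n → ℝ, x ⬝ᵥ x ≤ Δ ∧ v = objQ A a x} =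
      sSup {v : ℝ | ∃ t : ℝ, lambdaMin (borderD A a t) ≤ 0 ∧
        v = (Δ + 1) * lambdaMin (borderD A a t) - t} := by
  obtain ⟨x, hxΔ, hmin⟩ := exists_sphere_min hA hnpd a hΔ
  obtain ⟨μ, hμ⟩ := exists_multiplier hA a hΔ hxΔ hmin
  have hpsd := psd_of_min hA hΔ hxΔ hmin hμ
  have hlam : lambdaMin (borderD A a (a ⬝ᵥ x - μ)) = -μ := lambdaMin_borderD hA hxΔ hμ hpsd
  have hμ0 : 0 ≤ μ := by
    obtain ⟨w, hw0, hwA⟩ := npd_witness hA hnpd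
    have h1 := hpsd w
    have h2 := dp_self_pos hw0
    nlinarith
  have hax : a ⬝ᵥ x = x ⬝ᵥ A *ᵥ x + μ * Δ := by
    rw [hμ, add_dotProduct, smul_dotProduct, smul_eq_mul, hxΔ, dotProduct_comm (A *ᵥ x) x]
  set t0 : ℝ := a ⬝ᵥ x - μ with ht0
  have hfeas : lambdaMin (borderD A a t0) ≤ 0 := by rw [hlam]; linarith
  have hval : (Δ + 1) * lambdaMin (borderD A a t0) - t0 = objQ A a x := by
    rw [hlam]; unfold objQ; rw [ht0]; linarith
  set S1 : Set ℝ := {v : ℝ | ∃ x : Fin n → ℝ, x ⬝ᵥ x ≤ Δ ∧ v = objQ A a x} with hS1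
  set S2 : Set ℝ := {v : ℝ | ∃ t : ℝ, lambdaMin (borderD A a t) ≤ 0 ∧
        v = (Δ + 1) * lambdaMin (borderD A a t) - t} with hS2
  have hmemS1 : objQ A a x ∈ S1 := ⟨x, le_of_eq hxΔ, rfl⟩
  have hmemS2 : objQ A a x ∈ S2 := ⟨t0, hfeas, hval.symm⟩
  have hub : ∀ v ∈ S2, v ≤ objQ A a x := by
    rintro v ⟨t, hle, rfl⟩
    exact weak_dual hA a hle (le_of_eq hxΔ)
  have hlb : ∀ v ∈ S1, objQ A a x ≤ v := by
    rintro v ⟨y, hy, rfl⟩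
    exact hmin y hy
  have h1 : sInf S1 = objQ A a x :=
    le_antisymm (csInf_le ⟨objQ A a x, hlb⟩ hmemS1) (le_csInf ⟨_, hmemS1⟩ hlb)
  have h2 : sSup S2 = objQ A a x :=
    le_antisymm (csSup_le ⟨_, hmemS2⟩ hub) (le_csSup ⟨objQ A a x, hub⟩ hmemS2)
  rw [h1, h2]

end RWproof
end

section
/- (Lemma 1, part 2) Suppose (t*, λ*) with λ* ≥ 0 maximizes k(t,λ) := (Δ+1)λmin(D(t,λ)) − t − λc over t ∈ ℝ, λ ≥ 0. If λmin(D(t*,λ*)) < λmin(A), then every nonzero eigenvector of D(t*,λ*) corresponding to λmin(D(t*,λ*)) has nonzero first component; otherwise (λmin(D(t*,λ*)) = λmin(A)) there exists a basis of the eigenspace of λmin(D(t*,λ*)) such that exactly one basis vector has nonzero first component and all other basis vectors have zero first component. -/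
open Matrix

/-! ### Auxiliary spectral lemmas -/

section AuxGeneric
set_option linter.unusedSectionVars false

variable {ι : Type} [Fintype ι] [DecidableEq ι]

lemma aux_dot_sum_left (v : ι → ℝ) (f : ι → ι → ℝ) :
    v ⬝ᵥ (∑ i, f i) = ∑ i, v ⬝ᵥ f i := by
  simp only [dotProduct, Finset.sum_apply, Finset.mul_sum]
  exact Finset.sum_comm

lemma aux_mulVec_sum (M : Matrix ι ι ℝ) (f : ι → ι → ℝ) :
    M *ᵥ (∑ i, f i) = ∑ i, M *ᵥ f i := by
  funext j
  simp only [mulVec, aux_dot_sum_left, Finset.sum_apply]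

variable {M : Matrix ι ι ℝ} (hM : M.IsHermitian)
include hM

lemma aux_transp_eq : Mᵀ = M := by
  ext i j; have := congrFun (congrFun hM i) j; simpa using this

lemma aux_herm_dot (x y : ι → ℝ) : x ⬝ᵥ (M *ᵥ y) = (M *ᵥ x) ⬝ᵥ y := by
  rw [dotProduct_mulVec, ← mulVec_transpose, aux_transp_eq hM]

omit hM in
lemma aux_dot_eq_inner (x y : EuclideanSpace ℝ ι) : (inner ℝ x y : ℝ) = (x : ι → ℝ) ⬝ᵥ y := by
  simp [PiLp.inner_apply, dotProduct, mul_comm]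

/-- coefficient of w in the eigenbasis -/
noncomputable def ec (hM : M.IsHermitian) (w : ι → ℝ) (i : ι) : ℝ :=
  ⇑(hM.eigenvectorBasis i) ⬝ᵥ w

lemma aux_mulVec_basis (i : ι) :
    M *ᵥ ⇑(hM.eigenvectorBasis i) = hM.eigenvalues i • ⇑(hM.eigenvectorBasis i) :=
  hM.mulVec_eigenvectorBasis i

lemma aux_eig_key {μ : ℝ} {v : ι → ℝ}
    (hv : v ≠ 0) (heq : M *ᵥ v = μ • v) : ∃ i, hM.eigenvalues i = μ := by
  have hc : ∀ i, hM.eigenvalues i * ec hM v i = μ * ec hM v i := by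
    intro i
    have h1 : ⇑(hM.eigenvectorBasis i) ⬝ᵥ (M *ᵥ v) = μ * ec hM v i := by
      rw [heq, dotProduct_smul]; rfl
    have h2 : ⇑(hM.eigenvectorBasis i) ⬝ᵥ (M *ᵥ v) = hM.eigenvalues i * ec hM v i := by
      rw [aux_herm_dot hM, aux_mulVec_basis hM, smul_dotProduct]; rfl
    rw [← h1, h2]
  by_contra hne
  push_neg at hne
  apply hv
  have hz : ∀ i, ec hM v i = 0 := by
    intro i
    rcases mul_eq_mul_right_iff.mp (hc i) with h | h
    · exact absurd h (hne i)
    · exact h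
  have h0 : hM.eigenvectorBasis.repr (WithLp.toLp 2 v : EuclideanSpace ℝ ι) = 0 := by
    ext i
    rw [hM.eigenvectorBasis.repr_apply_apply]
    simpa [aux_dot_eq_inner, ec] using hz i
  have h1 : (WithLp.toLp 2 v : EuclideanSpace ℝ ι) = 0 :=
    hM.eigenvectorBasis.repr.injective (by simpa using h0)
  have h2 := congrArg WithLp.ofLp h1
  simpa using h2

lemma aux_basis_ne_zero (i : ι) : ⇑(hM.eigenvectorBasis i) ≠ (0 : ι → ℝ) := by
  intro h
  have h1 := hM.eigenvectorBasis.orthonormal.1 i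
  rw [show (hM.eigenvectorBasis i : EuclideanSpace ℝ ι) = 0 from WithLp.ofLp_injective 2 (by simpa using h)] at h1
  simp at h1

lemma aux_eigset_eq :
    {μ : ℝ | ∃ v : ι → ℝ, v ≠ 0 ∧ M.mulVec v = μ • v} = Set.range hM.eigenvalues := by
  ext μ
  constructor
  · rintro ⟨v, hv, heq⟩
    obtain ⟨i, hi⟩ := aux_eig_key hM hv heq
    exact ⟨i, hi⟩
  · rintro ⟨i, rfl⟩
    exact ⟨_, aux_basis_ne_zero hM i, aux_mulVec_basis hM i⟩

lemma aux_lambdaMin_le (i : ι) : lambdaMin M ≤ hM.eigenvalues i := by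
  rw [lambdaMin, aux_eigset_eq hM]
  exact csInf_le (Set.finite_range _).bddBelow ⟨i, rfl⟩

lemma aux_lambdaMin_le_of {μ : ℝ} {v : ι → ℝ} (hv : v ≠ 0) (heq : M *ᵥ v = μ • v) :
    lambdaMin M ≤ μ := by
  obtain ⟨i, hi⟩ := aux_eig_key hM hv heq
  exact hi ▸ aux_lambdaMin_le hM i

lemma aux_lambdaMin_attained [Nonempty ι] : ∃ i, hM.eigenvalues i = lambdaMin M := by
  have h : lambdaMin M ∈ Set.range hM.eigenvalues := by
    rw [lambdaMin, aux_eigset_eq hM]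
    exact (Set.range_nonempty _).csInf_mem (Set.finite_range _)
  obtain ⟨i, hi⟩ := h
  exact ⟨i, hi⟩

lemma aux_exists_eigvec [Nonempty ι] : ∃ v : ι → ℝ, v ≠ 0 ∧ M *ᵥ v = lambdaMin M • v := by
  obtain ⟨i, hi⟩ := aux_lambdaMin_attained hM
  exact ⟨_, aux_basis_ne_zero hM i, by rw [aux_mulVec_basis hM, hi]⟩

lemma aux_lambdaMin_ge [Nonempty ι] {μ : ℝ}
    (h : ∀ v : ι → ℝ, μ * (v ⬝ᵥ v) ≤ v ⬝ᵥ (M *ᵥ v)) : μ ≤ lambdaMin M := by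
  obtain ⟨v, hv, heq⟩ := aux_exists_eigvec hM
  have h1 : v ⬝ᵥ (M *ᵥ v) = lambdaMin M * (v ⬝ᵥ v) := by
    rw [heq, dotProduct_smul]; rfl
  have h2 := h v
  rw [h1] at h2
  have hpos : 0 < v ⬝ᵥ v := by
    have hnn : 0 ≤ v ⬝ᵥ v := Finset.sum_nonneg fun i _ => mul_self_nonneg (v i)
    rcases lt_or_eq_of_le hnn with h | h
    · exact h
    · exact absurd (dotProduct_self_eq_zero.mp h.symm) hv
  exact le_of_mul_le_mul_right h2 hpos

lemma aux_expand (w : ι → ℝ) :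
    w = ∑ i, ec hM w i • ⇑(hM.eigenvectorBasis i) := by
  have h := hM.eigenvectorBasis.sum_repr' (WithLp.toLp 2 w : EuclideanSpace ℝ ι)
  have h2 : ∀ i, (inner ℝ (hM.eigenvectorBasis i) (WithLp.toLp 2 w : EuclideanSpace ℝ ι) : ℝ)
      = ec hM w i := by
    intro i; rw [aux_dot_eq_inner]; rfl
  have h3 := congrArg WithLp.ofLp h
  simp only [h2, WithLp.ofLp_sum, WithLp.ofLp_smul, WithLp.ofLp_toLp] at h3
  exact h3.symm

lemma aux_dot_self_eq (w : ι → ℝ) : w ⬝ᵥ w = ∑ i, (ec hM w i)^2 := by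
  nth_rewrite 2 [aux_expand hM w]
  rw [aux_dot_sum_left]
  apply Finset.sum_congr rfl
  intro i _
  rw [dotProduct_smul, smul_eq_mul, dotProduct_comm, sq]
  rfl

lemma aux_dot_mulVec_eq (w : ι → ℝ) :
    w ⬝ᵥ (M *ᵥ w) = ∑ i, hM.eigenvalues i * (ec hM w i)^2 := by
  nth_rewrite 2 [aux_expand hM w]
  rw [aux_mulVec_sum M (fun i => ec hM w i • ⇑(hM.eigenvectorBasis i)), aux_dot_sum_left]
  apply Finset.sum_congr rfl
  intro i _
  rw [mulVec_smul, aux_mulVec_basis hM, dotProduct_smul, smul_eq_mul, dotProduct_smul,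
    smul_eq_mul, dotProduct_comm, sq]
  show ec hM w i * (hM.eigenvalues i * ec hM w i) = _
  ring

lemma aux_sum_basis_sq (j : ι) : ∑ i, (hM.eigenvectorBasis i j)^2 = 1 := by
  have h := hM.eigenvectorBasis.sum_inner_mul_inner
    (EuclideanSpace.single j (1:ℝ)) (EuclideanSpace.single j (1:ℝ))
  simp only [EuclideanSpace.inner_single_left, EuclideanSpace.inner_single_right,
    starRingEnd_apply, star_trivial, one_mul, mul_one] at h
  simp only [EuclideanSpace.single_apply, if_true, eq_self_iff_true] at h
  rw [← h]
  apply Finset.sum_congr rfl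
  intro i _
  rw [sq]

lemma aux_expand_apply (w : ι → ℝ) (j : ι) :
    w j = ∑ i, ec hM w i * hM.eigenvectorBasis i j := by
  conv_lhs => rw [aux_expand hM w]
  simp [Finset.sum_apply]

end AuxGeneric

/-! ### Bordered-matrix lemmas -/

lemma borderD2_herm {n : ℕ} {A : Matrix (Fin n) (Fin n) ℝ} (hA : A.IsHermitian)
    (a b : Fin n → ℝ) (t l : ℝ) : (borderD2 A a b t l).IsHermitian := by
  have hAs : ∀ i j, A j i = A i j := fun i j => by
    have := congrFun (congrFun hA i) j; simpa using this
  show _ = _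
  ext i j
  cases i <;> cases j <;>
    simp [borderD2, borderD, conjTranspose_apply, fromBlocks, hAs]

lemma borderD2_row {n : ℕ} (A : Matrix (Fin n) (Fin n) ℝ) (a b : Fin n → ℝ)
    (t l δ : ℝ) (w : Unit ⊕ Fin n → ℝ) (j : Unit ⊕ Fin n) :
    (borderD2 A a b (t - δ) l *ᵥ w) j
      = (borderD2 A a b t l *ᵥ w) j - (if j = Sum.inl () then δ * w (Sum.inl ()) else 0) := by
  cases j with
  | inl u =>
    simp only [borderD2, borderD, mulVec, dotProduct, Fintype.sum_sum_type, fromBlocks_apply₁₁,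
      fromBlocks_apply₁₂, of_apply, Finset.univ_unique, Finset.sum_singleton, if_pos rfl]
    rw [if_pos trivial]
    cases u
    ring_nf
    congr 1
    apply Finset.sum_congr rfl
    intro x _
    ring
  | inr i =>
    simp [borderD2, borderD, mulVec, dotProduct, Fintype.sum_sum_type]

lemma borderD2_dot {n : ℕ} (A : Matrix (Fin n) (Fin n) ℝ) (a b : Fin n → ℝ)
    (t l δ : ℝ) (w : Unit ⊕ Fin n → ℝ) :
    w ⬝ᵥ (borderD2 A a b (t - δ) l *ᵥ w)
      = w ⬝ᵥ (borderD2 A a b t l *ᵥ w) - δ * (w (Sum.inl ()))^2 := by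
  simp only [dotProduct, borderD2_row A a b t l δ w, mul_sub, mul_ite, mul_zero]
  rw [Finset.sum_sub_distrib, Finset.sum_ite_eq' Finset.univ (Sum.inl ())]
  simp [sq]; ring

/-! ### Key existence lemma -/

lemma keyExists {n : ℕ} {A : Matrix (Fin n) (Fin n) ℝ} (hA : A.IsHermitian)
    (a b : Fin n → ℝ) (c Δ : ℝ) (hΔ : 0 < Δ) (ts ls : ℝ) (hls : 0 ≤ ls)
    (hmax : ∀ t l : ℝ, 0 ≤ l → ktl A a b c Δ t l ≤ ktl A a b c Δ ts ls) :
    ∃ z : Unit ⊕ Fin n → ℝ,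
      (borderD2 A a b ts ls) *ᵥ z = lambdaMin (borderD2 A a b ts ls) • z
        ∧ z (Sum.inl ()) ≠ 0 := by
  by_contra hcon
  push_neg at hcon
  set M := borderD2 A a b ts ls with hMdef
  have hM : M.IsHermitian := borderD2_herm hA a b ts ls
  set μ := lambdaMin M with hμ
  haveI : Nonempty (Unit ⊕ Fin n) := ⟨Sum.inl ()⟩
  have hz : ∀ i, hM.eigenvalues i = μ → hM.eigenvectorBasis i (Sum.inl ()) = 0 := by
    intro i hi
    exact hcon ⇑(hM.eigenvectorBasis i) (by rw [aux_mulVec_basis hM, hi])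
  have hle : ∀ i, μ ≤ hM.eigenvalues i := aux_lambdaMin_le hM
  set S : Finset (Unit ⊕ Fin n) := Finset.univ.filter (fun i => hM.eigenvalues i ≠ μ) with hS
  have hSne : S.Nonempty := by
    by_contra hSe
    rw [Finset.not_nonempty_iff_eq_empty] at hSe
    have hall : ∀ i, hM.eigenvectorBasis i (Sum.inl ()) = 0 := by
      intro i
      apply hz
      by_contra hne
      have hiS : i ∈ S := by simp [hS, hne]
      rw [hSe] at hiS; exact absurd hiS (Finset.notMem_empty i)
    have h1 := aux_expand_apply hM (Pi.single (Sum.inl ()) 1) (Sum.inl ())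
    rw [Pi.single_eq_same] at h1
    simp [hall] at h1
  obtain ⟨i₀, hi₀S, hi₀min⟩ := S.exists_min_image (fun i => hM.eigenvalues i - μ) hSne
  set δ := hM.eigenvalues i₀ - μ with hδ
  have hδpos : 0 < δ := by
    have h1 : hM.eigenvalues i₀ ≠ μ := (Finset.mem_filter.mp hi₀S).2
    have h2 := lt_of_le_of_ne (hle i₀) (Ne.symm h1)
    simp only [hδ]; linarith
  have hδle : ∀ i ∈ S, δ ≤ hM.eigenvalues i - μ := hi₀min
  have hray : ∀ w : Unit ⊕ Fin n → ℝ,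
      μ * (w ⬝ᵥ w) ≤ w ⬝ᵥ (borderD2 A a b (ts - δ) ls *ᵥ w) := by
    intro w
    rw [borderD2_dot A a b ts ls δ w]
    set cf := ec hM w with hcf
    have e1 : w ⬝ᵥ (M *ᵥ w) = ∑ i, hM.eigenvalues i * (cf i)^2 := aux_dot_mulVec_eq hM w
    have e2 : w ⬝ᵥ w = ∑ i, (cf i)^2 := aux_dot_self_eq hM w
    have e3 : w (Sum.inl ()) = ∑ i ∈ S, cf i * hM.eigenvectorBasis i (Sum.inl ()) := by
      rw [aux_expand_apply hM w (Sum.inl ())]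
      symm
      apply Finset.sum_subset (Finset.subset_univ S)
      intro i _ hiS
      have hiμ : hM.eigenvalues i = μ := by
        by_contra h; exact hiS (Finset.mem_filter.mpr ⟨Finset.mem_univ i, h⟩)
      rw [hz i hiμ, mul_zero]
    have e4 : (w (Sum.inl ()))^2 ≤ ∑ i ∈ S, (cf i)^2 := by
      rw [e3]
      calc (∑ i ∈ S, cf i * hM.eigenvectorBasis i (Sum.inl ()))^2
          ≤ (∑ i ∈ S, (cf i)^2) * (∑ i ∈ S, (hM.eigenvectorBasis i (Sum.inl ()))^2) :=
            Finset.sum_mul_sq_le_sq_mul_sq S _ _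
        _ ≤ (∑ i ∈ S, (cf i)^2) * 1 := by
            apply mul_le_mul_of_nonneg_left _ (Finset.sum_nonneg fun i _ => sq_nonneg _)
            rw [← aux_sum_basis_sq hM (Sum.inl ())]
            exact Finset.sum_le_sum_of_subset_of_nonneg (Finset.subset_univ S)
              (fun i _ _ => sq_nonneg _)
        _ = ∑ i ∈ S, (cf i)^2 := mul_one _
    have eA : ∑ i, (hM.eigenvalues i - μ) * (cf i)^2
        = ∑ i ∈ S, (hM.eigenvalues i - μ) * (cf i)^2 := by
      symm; apply Finset.sum_subset (Finset.subset_univ S)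
      intro i _ hiS
      have hiμ : hM.eigenvalues i = μ := by
        by_contra h; exact hiS (Finset.mem_filter.mpr ⟨Finset.mem_univ i, h⟩)
      rw [hiμ]; ring
    have eB : δ * ∑ i ∈ S, (cf i)^2 ≤ ∑ i ∈ S, (hM.eigenvalues i - μ) * (cf i)^2 := by
      rw [Finset.mul_sum]
      apply Finset.sum_le_sum
      intro i hiS
      exact mul_le_mul_of_nonneg_right (hδle i hiS) (sq_nonneg _)
    have eC : ∑ i, (hM.eigenvalues i - μ) * (cf i)^2
        = (∑ i, hM.eigenvalues i * (cf i)^2) - μ * ∑ i, (cf i)^2 := by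
      rw [Finset.mul_sum, ← Finset.sum_sub_distrib]
      apply Finset.sum_congr rfl; intro i _; ring
    have e5 : δ * (w (Sum.inl ()))^2 ≤ δ * ∑ i ∈ S, (cf i)^2 :=
      mul_le_mul_of_nonneg_left e4 hδpos.le
    rw [e1, e2]
    linarith [eA, eB, eC, e5]
  have hmin : μ ≤ lambdaMin (borderD2 A a b (ts - δ) ls) :=
    aux_lambdaMin_ge (borderD2_herm hA a b (ts - δ) ls) hray
  have hk := hmax (ts - δ) ls hls
  have hk1 : ktl A a b c Δ (ts - δ) ls
      = (Δ + 1) * lambdaMin (borderD2 A a b (ts - δ) ls) - (ts - δ) - ls * c := rfl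
  have hk2 : ktl A a b c Δ ts ls = (Δ + 1) * μ - ts - ls * c := rfl
  have hDpos : (0:ℝ) ≤ Δ + 1 := by linarith
  rw [hk1, hk2] at hk
  have := mul_le_mul_of_nonneg_left hmin hDpos
  linarith

/-- Lemma 1, part 2. -/
theorem stmt9 {n : ℕ} (hn : 1 ≤ n) (A : Matrix (Fin n) (Fin n) ℝ) (hA : A.IsHermitian)
    (hnpd : ¬ A.PosDef) (a b : Fin n → ℝ) (c Δ : ℝ) (hΔ : 0 < Δ)
    (ts ls : ℝ) (hls : 0 ≤ ls)
    (hmax : ∀ t l : ℝ, 0 ≤ l → ktl A a b c Δ t l ≤ ktl A a b c Δ ts ls) :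
    (lambdaMin (borderD2 A a b ts ls) < lambdaMin A →
      ∀ y : Unit ⊕ Fin n → ℝ, y ≠ 0 →
        (borderD2 A a b ts ls).mulVec y = lambdaMin (borderD2 A a b ts ls) • y →
        y (Sum.inl ()) ≠ 0) ∧
    (lambdaMin (borderD2 A a b ts ls) = lambdaMin A →
      ∃ (k : ℕ) (f : Fin k → (Unit ⊕ Fin n → ℝ)),
        LinearIndependent ℝ f ∧
        Submodule.span ℝ (Set.range f) =
          LinearMap.ker ((borderD2 A a b ts ls - lambdaMin (borderD2 A a b ts ls) •
            (1 : Matrix (Unit ⊕ Fin n) (Unit ⊕ Fin n) ℝ)).mulVecLin) ∧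
        ∃ i0 : Fin k, f i0 (Sum.inl ()) ≠ 0 ∧
          ∀ i : Fin k, i ≠ i0 → f i (Sum.inl ()) = 0) := by
  constructor
  · -- Part 1
    intro hlt y hy hyeq
    intro hy0'
    have hy0 : y (Sum.inl ()) = 0 := hy0'
    set v : Fin n → ℝ := fun i => y (Sum.inr i) with hv
    have hvne : v ≠ 0 := by
      intro h
      apply hy
      funext j
      cases j with
      | inl u => cases u; exact hy0
      | inr i => exact congrFun h i
    have hAv : A *ᵥ v = lambdaMin (borderD2 A a b ts ls) • v := by
      funext i
      have h := congrFun hyeq (Sum.inr i)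
      simp only [borderD2, borderD, mulVec, dotProduct, Fintype.sum_sum_type,
        Finset.univ_unique, Finset.sum_singleton, fromBlocks_apply₂₁, fromBlocks_apply₂₂,
        of_apply, Pi.smul_apply, smul_eq_mul] at h
      have h0 : y (Sum.inl (default : Unit)) = 0 := hy0
      rw [h0, mul_zero, zero_add] at h
      simpa [borderD2, borderD, mulVec, dotProduct, hv] using h
    have hle := aux_lambdaMin_le_of hA hvne hAv
    exact absurd (lt_of_le_of_lt hle hlt) (lt_irrefl _)
  · -- Part 2
    intro _
    obtain ⟨z, hz1, hz2⟩ := keyExists hA a b c Δ hΔ ts ls hls hmax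
    set M := borderD2 A a b ts ls with hMdef
    set μ := lambdaMin M with hμ
    set K := LinearMap.ker (M - μ • (1 : Matrix (Unit ⊕ Fin n) (Unit ⊕ Fin n) ℝ)).mulVecLin
      with hK
    have hmem : ∀ w : Unit ⊕ Fin n → ℝ, w ∈ K ↔ M *ᵥ w = μ • w := by
      intro w
      rw [hK, LinearMap.mem_ker, mulVecLin_apply, sub_mulVec, smul_mulVec, one_mulVec,
        sub_eq_zero]
    set φ : (Unit ⊕ Fin n → ℝ) →ₗ[ℝ] ℝ := LinearMap.proj (Sum.inl ()) with hφ
    set K₀ := K ⊓ LinearMap.ker φ with hK₀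
    set m := Module.finrank ℝ K₀ with hm
    set g := Module.finBasis ℝ K₀ with hg
    set f : Fin (m + 1) → (Unit ⊕ Fin n → ℝ)
      := Fin.cons z (fun i => ((g i : Unit ⊕ Fin n → ℝ))) with hf
    have hspan0 : Submodule.span ℝ (Set.range (fun i => ((g i : Unit ⊕ Fin n → ℝ)))) = K₀ := by
      have h1 : (Set.range fun i => ((g i : Unit ⊕ Fin n → ℝ)))
          = K₀.subtype '' Set.range g := by
        rw [← Set.range_comp]; rfl
      rw [h1, Submodule.span_image, g.span_eq, Submodule.map_subtype_top]
    have hzK : z ∈ K := (hmem z).mpr hz1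
    have hznot : z ∉ K₀ := by
      intro h
      exact hz2 (by simpa [hφ] using (Submodule.mem_inf.mp h).2)
    have hLI : LinearIndependent ℝ f := by
      rw [hf]
      apply linearIndependent_fin_cons.mpr
      constructor
      · exact (g.linearIndependent).map' K₀.subtype (Submodule.ker_subtype K₀)
      · rw [hspan0]; exact hznot
    have hfspan : Submodule.span ℝ (Set.range f) = K := by
      apply le_antisymm
      · rw [Submodule.span_le]
        rintro w ⟨i, rfl⟩
        refine Fin.cases ?_ ?_ i
        · simpa [hf] using hzK
        · intro j
          have : (g j : Unit ⊕ Fin n → ℝ) ∈ K₀ := (g j).2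
          simpa [hf] using (Submodule.mem_inf.mp this).1
      · intro w hw
        set α := w (Sum.inl ()) / z (Sum.inl ()) with hα
        have hw' : w - α • z ∈ K₀ := by
          apply Submodule.mem_inf.mpr
          constructor
          · exact K.sub_mem hw (K.smul_mem α hzK)
          · rw [LinearMap.mem_ker]
            show (w - α • z) (Sum.inl ()) = 0
            simp only [Pi.sub_apply, Pi.smul_apply, smul_eq_mul, hα]
            field_simp
            ring
        have hK₀le : K₀ ≤ Submodule.span ℝ (Set.range f) := by
          rw [← hspan0]
          apply Submodule.span_mono
          rintro x ⟨i, hi⟩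
          exact ⟨i.succ, by simpa [hf] using hi⟩
        have h1 : w - α • z ∈ Submodule.span ℝ (Set.range f) := hK₀le hw'
        have h2 : z ∈ Submodule.span ℝ (Set.range f) :=
          Submodule.subset_span ⟨0, by simp [hf]⟩
        have h3 := Submodule.add_mem _ (Submodule.smul_mem _ α h2) h1
        simpa using h3
    refine ⟨m + 1, f, hLI, by rw [hfspan], 0, ?_, ?_⟩
    · show f 0 (Sum.inl ()) ≠ 0
      rw [hf]
      simpa [Fin.cons_zero] using hz2
    · intro i hi
      obtain ⟨j, rfl⟩ := Fin.eq_succ_of_ne_zero hi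
      show f j.succ (Sum.inl ()) = 0
      rw [hf]
      simp only [Fin.cons_succ]
      have hj : (g j : Unit ⊕ Fin n → ℝ) ∈ K₀ := (g j).2
      have := (Submodule.mem_inf.mp hj).2
      simpa [hφ] using this
end
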